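/- Let r_v, r_u, r_w > 0 with weights Θ_v, Θ_u, Θ_w ∈ [0,π/2] for the opposite edges, and consider the Euclidean circle-packing triangle angles. If r_u and r_w stay bounded while r_v → ∞ with r_u/r_v → 0 and r_w/r_v → 0, then the angle θ_v at vertex v tends to 0 and the sum of angles at u and w tends to π. -/

import Mathlib

open Real Filter

/-- Euclidean distance between the centers of two circles of radii `a`, `b`
meeting at angle `θ`. -/
noncomputable def circleEdgeLength (a b θ : ℝ) : ℝ :=
  Real.sqrt (a ^ 2 + b ^ 2 + 2 * a * b * Real.cos θ)

/-- The angle at the first vertex of the circle-packing triangle with radii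
`a b c` and weights `A B C` (each weight opposite the corresponding vertex). -/
noncomputable def circleAngle (A B C a b c : ℝ) : ℝ :=
  Real.arccos ((circleEdgeLength a c B ^ 2 + circleEdgeLength a b C ^ 2 -
      circleEdgeLength b c A ^ 2) /
    (2 * circleEdgeLength a c B * circleEdgeLength a b C))

lemma circleEdgeLength_comm (a b θ : ℝ) : circleEdgeLength a b θ = circleEdgeLength b a θ := by
  unfold circleEdgeLength; ring_nf

lemma left_le_circleEdgeLength {a b θ : ℝ} (ha : 0 ≤ a) (hb : 0 ≤ b) (hθ : 0 ≤ Real.cos θ) :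
    a ≤ circleEdgeLength a b θ := by
  have h : a^2 ≤ a^2 + b^2 + 2*a*b*Real.cos θ := by
    nlinarith [mul_nonneg (mul_nonneg ha hb) hθ, sq_nonneg b]
  calc a = Real.sqrt (a^2) := (Real.sqrt_sq ha).symm
    _ ≤ _ := Real.sqrt_le_sqrt h

lemma right_le_circleEdgeLength {a b θ : ℝ} (ha : 0 ≤ a) (hb : 0 ≤ b) (hθ : 0 ≤ Real.cos θ) :
    b ≤ circleEdgeLength a b θ := by
  rw [circleEdgeLength_comm]; exact left_le_circleEdgeLength hb ha hθ

lemma circleEdgeLength_le {a b θ : ℝ} (ha : 0 ≤ a) (hb : 0 ≤ b) :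
    circleEdgeLength a b θ ≤ a + b := by
  have h : a^2 + b^2 + 2*a*b*Real.cos θ ≤ (a+b)^2 := by
    nlinarith [mul_nonneg ha hb, Real.cos_le_one θ]
  calc circleEdgeLength a b θ ≤ Real.sqrt ((a+b)^2) := Real.sqrt_le_sqrt h
    _ = a + b := Real.sqrt_sq (by positivity)


set_option maxHeartbeats 1000000 in
lemma arccos_triangle_sum {x y z : ℝ} (hx : 0 < x) (hy : 0 < y) (hz : 0 < z)
    (h1 : x ≤ y + z) (h2 : y ≤ x + z) (h3 : z ≤ x + y) :
    arccos ((y^2+z^2-x^2)/(2*y*z)) + arccos ((x^2+z^2-y^2)/(2*x*z)) +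
      arccos ((x^2+y^2-z^2)/(2*x*y)) = π := by
  set qx := (y^2+z^2-x^2)/(2*y*z) with hqx
  set qy := (x^2+z^2-y^2)/(2*x*z) with hqy
  set qz := (x^2+y^2-z^2)/(2*x*y) with hqz
  set E := (x+y+z)*(-x+y+z)*(x-y+z)*(x+y-z) with hE
  have hE0 : 0 ≤ E := by
    apply mul_nonneg (mul_nonneg (mul_nonneg (by linarith) (by linarith)) (by linarith)) (by linarith)
  have hqx1 : -1 ≤ qx := by rw [hqx, le_div_iff₀ (by positivity)]; nlinarith
  have hqx2 : qx ≤ 1 := by rw [hqx, div_le_one (by positivity)]; nlinarith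
  have hqy1 : -1 ≤ qy := by rw [hqy, le_div_iff₀ (by positivity)]; nlinarith
  have hqy2 : qy ≤ 1 := by rw [hqy, div_le_one (by positivity)]; nlinarith
  have hqz1 : -1 ≤ qz := by rw [hqz, le_div_iff₀ (by positivity)]; nlinarith
  have hqz2 : qz ≤ 1 := by rw [hqz, div_le_one (by positivity)]; nlinarith
  have sy : Real.sqrt (1 - qy^2) = Real.sqrt E / (2*x*z) := by
    rw [show 1 - qy^2 = E / (2*x*z)^2 by rw [hqy, hE]; field_simp; ring,
      Real.sqrt_div hE0, Real.sqrt_sq (by positivity)]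
  have sz : Real.sqrt (1 - qz^2) = Real.sqrt E / (2*x*y) := by
    rw [show 1 - qz^2 = E / (2*x*y)^2 by rw [hqz, hE]; field_simp; ring,
      Real.sqrt_div hE0, Real.sqrt_sq (by positivity)]
  have hEsq : Real.sqrt E * Real.sqrt E = E := Real.mul_self_sqrt hE0
  have prod : Real.sqrt (1 - qy^2) * Real.sqrt (1 - qz^2) = E / (4*x^2*y*z) := by
    rw [sy, sz, div_mul_div_comm, hEsq]
    ring_nf
  have hcos : Real.cos (arccos qy + arccos qz) = -qx := by
    rw [Real.cos_add, Real.cos_arccos hqy1 hqy2, Real.cos_arccos hqz1 hqz2,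
      Real.sin_arccos, Real.sin_arccos, prod, hqx, hqy, hqz, hE]
    field_simp
    ring
  have hsin : Real.sin (arccos qy + arccos qz) = Real.sqrt E / (2*y*z) := by
    rw [Real.sin_add, Real.cos_arccos hqy1 hqy2, Real.cos_arccos hqz1 hqz2,
      Real.sin_arccos, Real.sin_arccos, sy, sz, hqy, hqz]
    field_simp
    ring
  have hub : arccos qy + arccos qz ≤ π := by
    by_contra hc
    push_neg at hc
    have hle : arccos qy + arccos qz ≤ 2 * π := by
      have := Real.arccos_le_pi qy; have := Real.arccos_le_pi qz; linarith
    rcases eq_or_lt_of_le hle with heq | hlt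
    · have hy' : arccos qy = π := by
        have := Real.arccos_le_pi qy; have := Real.arccos_le_pi qz; linarith
      have hz' : arccos qz = π := by
        have := Real.arccos_le_pi qy; have := Real.arccos_le_pi qz; linarith
      rw [Real.arccos_eq_pi] at hy' hz'
      rw [hqy, div_le_iff₀ (by positivity)] at hy'
      rw [hqz, div_le_iff₀ (by positivity)] at hz'
      nlinarith [mul_pos hx hy, mul_pos hx hz, sq_nonneg x]
    · have : Real.sin (arccos qy + arccos qz) < 0 := by
        have h0 : Real.sin (arccos qy + arccos qz - π) > 0 :=
          Real.sin_pos_of_pos_of_lt_pi (by linarith) (by linarith)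
        rw [Real.sin_sub_pi] at h0
        linarith
      rw [hsin] at this
      have : 0 ≤ Real.sqrt E / (2*y*z) := by positivity
      linarith
  have hlb : 0 ≤ arccos qy + arccos qz := by
    have := Real.arccos_nonneg qy; have := Real.arccos_nonneg qz; linarith
  have key : arccos qy + arccos qz = π - arccos qx := by
    have := Real.arccos_cos hlb hub
    rw [hcos, Real.arccos_neg] at this
    linarith
  linarith

noncomputable def auxG (cu cw cv : ℝ) (p : ℝ × ℝ) : ℝ :=
  (2 + 2*p.2*cu + 2*p.1*cw - 2*p.1*p.2*cv) /
    (2 * Real.sqrt (1 + p.2^2 + 2*p.2*cu) * Real.sqrt (1 + p.1^2 + 2*p.1*cw))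


set_option maxHeartbeats 1000000 in
/-- If `r_v → ∞` while `r_u, r_w` stay in a compact subset of `(0,∞)`
(so `r_u/r_v → 0` and `r_w/r_v → 0`), then the angle at `v` tends to `0` and
the sum of the angles at `u` and `w` tends to `π`. -/
theorem circleAngle_degenerate_limit
    (Θv Θu Θw : ℝ)
    (hΘv : Θv ∈ Set.Icc 0 (π / 2)) (hΘu : Θu ∈ Set.Icc 0 (π / 2))
    (hΘw : Θw ∈ Set.Icc 0 (π / 2))
    (rv ru rw : ℕ → ℝ)
    (hrv : Tendsto rv atTop atTop)
    (hbound : ∃ a b : ℝ, 0 < a ∧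
      ∀ n, ru n ∈ Set.Icc a b ∧ rw n ∈ Set.Icc a b)
    (hu : Tendsto (fun n => ru n / rv n) atTop (nhds 0))
    (hw : Tendsto (fun n => rw n / rv n) atTop (nhds 0)) :
    Tendsto (fun n => circleAngle Θv Θu Θw (rv n) (ru n) (rw n)) atTop (nhds 0) ∧
    Tendsto (fun n => circleAngle Θu Θv Θw (ru n) (rv n) (rw n) +
      circleAngle Θw Θv Θu (rw n) (rv n) (ru n)) atTop (nhds π) := by
  obtain ⟨a, b, ha, hab⟩ := hbound
  have hru : ∀ n, 0 < ru n := fun n => lt_of_lt_of_le ha (hab n).1.1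
  have hrw : ∀ n, 0 < rw n := fun n => lt_of_lt_of_le ha (hab n).2.1
  have hcv : 0 ≤ Real.cos Θv :=
    Real.cos_nonneg_of_mem_Icc ⟨by linarith [hΘv.1, Real.pi_pos], hΘv.2⟩
  have hcu : 0 ≤ Real.cos Θu :=
    Real.cos_nonneg_of_mem_Icc ⟨by linarith [hΘu.1, Real.pi_pos], hΘu.2⟩
  have hcw : 0 ≤ Real.cos Θw :=
    Real.cos_nonneg_of_mem_Icc ⟨by linarith [hΘw.1, Real.pi_pos], hΘw.2⟩
  -- limit of the cosine quotient
  have hGc : ContinuousAt (auxG (Real.cos Θu) (Real.cos Θw) (Real.cos Θv)) (0, 0) := by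
    apply ContinuousAt.div
    · fun_prop
    · fun_prop
    · norm_num
  have hG0 : auxG (Real.cos Θu) (Real.cos Θw) (Real.cos Θv) (0, 0) = 1 := by
    simp [auxG]
  have hpair : Tendsto (fun n => (ru n / rv n, rw n / rv n)) atTop (nhds ((0:ℝ), (0:ℝ))) :=
    hu.prodMk_nhds hw
  have hq : Tendsto (fun n => auxG (Real.cos Θu) (Real.cos Θw) (Real.cos Θv)
      (ru n / rv n, rw n / rv n)) atTop (nhds 1) := by
    rw [← hG0]; exact hGc.tendsto.comp hpair
  have hkey : ∀ᶠ n in atTop, circleAngle Θv Θu Θw (rv n) (ru n) (rw n) =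
      Real.arccos (auxG (Real.cos Θu) (Real.cos Θw) (Real.cos Θv) (ru n / rv n, rw n / rv n)) := by
    filter_upwards [hrv.eventually_gt_atTop 0] with n hn
    have hru' := hru n
    have hrw' := hrw n
    have hXpos : (0:ℝ) < 1 + (rw n / rv n)^2 + 2*(rw n / rv n)*Real.cos Θu := by
      have h0 : 0 ≤ 2*(rw n / rv n)*Real.cos Θu := mul_nonneg (by positivity) hcu
      nlinarith [sq_nonneg (rw n / rv n)]
    have hYpos : (0:ℝ) < 1 + (ru n / rv n)^2 + 2*(ru n / rv n)*Real.cos Θw := by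
      have h0 : 0 ≤ 2*(ru n / rv n)*Real.cos Θw := mul_nonneg (by positivity) hcw
      nlinarith [sq_nonneg (ru n / rv n)]
    have e1 : circleEdgeLength (rv n) (rw n) Θu =
        rv n * Real.sqrt (1 + (rw n / rv n)^2 + 2*(rw n / rv n)*Real.cos Θu) := by
      unfold circleEdgeLength
      rw [show (rv n)^2 + (rw n)^2 + 2*(rv n)*(rw n)*Real.cos Θu =
          (rv n)^2 * (1 + (rw n / rv n)^2 + 2*(rw n / rv n)*Real.cos Θu) by
        field_simp]
      rw [Real.sqrt_mul (sq_nonneg _), Real.sqrt_sq hn.le]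
    have e2 : circleEdgeLength (rv n) (ru n) Θw =
        rv n * Real.sqrt (1 + (ru n / rv n)^2 + 2*(ru n / rv n)*Real.cos Θw) := by
      unfold circleEdgeLength
      rw [show (rv n)^2 + (ru n)^2 + 2*(rv n)*(ru n)*Real.cos Θw =
          (rv n)^2 * (1 + (ru n / rv n)^2 + 2*(ru n / rv n)*Real.cos Θw) by
        field_simp]
      rw [Real.sqrt_mul (sq_nonneg _), Real.sqrt_sq hn.le]
    have e3 : circleEdgeLength (ru n) (rw n) Θv ^ 2 =
        (ru n)^2 + (rw n)^2 + 2*(ru n)*(rw n)*Real.cos Θv := by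
      unfold circleEdgeLength
      refine Real.sq_sqrt ?_
      have h0 : 0 ≤ 2*(ru n)*(rw n)*Real.cos Θv := mul_nonneg (by positivity) hcv
      nlinarith [sq_nonneg (ru n), sq_nonneg (rw n)]
    unfold circleAngle
    congr 1
    rw [e1, e2, e3, mul_pow, mul_pow, Real.sq_sqrt hXpos.le, Real.sq_sqrt hYpos.le]
    simp only [auxG]
    rw [show 2 * (rv n * Real.sqrt (1 + (rw n / rv n)^2 + 2*(rw n / rv n)*Real.cos Θu)) *
          (rv n * Real.sqrt (1 + (ru n / rv n)^2 + 2*(ru n / rv n)*Real.cos Θw)) =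
        (rv n)^2 * (2 * Real.sqrt (1 + (rw n / rv n)^2 + 2*(rw n / rv n)*Real.cos Θu) *
          Real.sqrt (1 + (ru n / rv n)^2 + 2*(ru n / rv n)*Real.cos Θw)) by ring]
    rw [show (rv n)^2 * (1 + (rw n / rv n)^2 + 2*(rw n / rv n)*Real.cos Θu) +
          (rv n)^2 * (1 + (ru n / rv n)^2 + 2*(ru n / rv n)*Real.cos Θw) -
          ((ru n)^2 + (rw n)^2 + 2*(ru n)*(rw n)*Real.cos Θv) =
        (rv n)^2 * (2 + 2*(rw n / rv n)*Real.cos Θu + 2*(ru n / rv n)*Real.cos Θw -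
          2*(ru n / rv n)*(rw n / rv n)*Real.cos Θv) by field_simp; ring]
    exact mul_div_mul_left _ _ (by positivity)
  have part1 : Tendsto (fun n => circleAngle Θv Θu Θw (rv n) (ru n) (rw n)) atTop (nhds 0) := by
    have h0 : Tendsto (fun n => Real.arccos (auxG (Real.cos Θu) (Real.cos Θw) (Real.cos Θv)
        (ru n / rv n, rw n / rv n))) atTop (nhds 0) := by
      have := (Real.continuous_arccos.tendsto 1).comp hq
      simpa [Function.comp_def] using this
    exact h0.congr' (hkey.mono fun n h => h.symm)
  refine ⟨part1, ?_⟩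
  have tri : ∀ᶠ n in atTop, circleAngle Θu Θv Θw (ru n) (rv n) (rw n) +
      circleAngle Θw Θv Θu (rw n) (rv n) (ru n) =
      π - circleAngle Θv Θu Θw (rv n) (ru n) (rw n) := by
    filter_upwards [hrv.eventually_gt_atTop 0] with n hn
    have hru' := hru n
    have hrw' := hrw n
    set x := circleEdgeLength (ru n) (rw n) Θv with hxdef
    set y := circleEdgeLength (rv n) (rw n) Θu with hydef
    set z := circleEdgeLength (rv n) (ru n) Θw with hzdef
    have hxl : ru n ≤ x := left_le_circleEdgeLength hru'.le hrw'.le hcv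
    have hxr : rw n ≤ x := right_le_circleEdgeLength hru'.le hrw'.le hcv
    have hyl : rv n ≤ y := left_le_circleEdgeLength hn.le hrw'.le hcu
    have hyr : rw n ≤ y := right_le_circleEdgeLength hn.le hrw'.le hcu
    have hzl : rv n ≤ z := left_le_circleEdgeLength hn.le hru'.le hcw
    have hzr : ru n ≤ z := right_le_circleEdgeLength hn.le hru'.le hcw
    have hxu : x ≤ ru n + rw n := circleEdgeLength_le hru'.le hrw'.le
    have hyu : y ≤ rv n + rw n := circleEdgeLength_le hn.le hrw'.le
    have hzu : z ≤ rv n + ru n := circleEdgeLength_le hn.le hru'.le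
    have hx : 0 < x := lt_of_lt_of_le hru' hxl
    have hy : 0 < y := lt_of_lt_of_le hn hyl
    have hz : 0 < z := lt_of_lt_of_le hn hzl
    have hsum := arccos_triangle_sum hx hy hz (by linarith) (by linarith) (by linarith)
    have c1 : circleAngle Θv Θu Θw (rv n) (ru n) (rw n) =
        Real.arccos ((y^2+z^2-x^2)/(2*y*z)) := rfl
    have c2 : circleAngle Θu Θv Θw (ru n) (rv n) (rw n) =
        Real.arccos ((x^2+z^2-y^2)/(2*x*z)) := by
      unfold circleAngle
      rw [circleEdgeLength_comm (ru n) (rv n) Θw]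
    have c3 : circleAngle Θw Θv Θu (rw n) (rv n) (ru n) =
        Real.arccos ((x^2+y^2-z^2)/(2*x*y)) := by
      unfold circleAngle
      rw [circleEdgeLength_comm (rw n) (ru n) Θv, circleEdgeLength_comm (rw n) (rv n) Θu]
    rw [c1, c2, c3]
    linarith
  have hlim : Tendsto (fun n => π - circleAngle Θv Θu Θw (rv n) (ru n) (rw n)) atTop (nhds π) := by
    simpa using tendsto_const_nhds.sub part1
  exact hlim.congr' (tri.mono fun n h => h.symm)
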